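/- It holds that |∫_Ω κ_x (κ_u(u) − κ_u(v)) ‖g‖² dμ| ≤ (C_{u'} C₀ / √κ̲) · (∫_Ω |u − v|² dμ)^{1/2} · (∫_Ω κ_x κ_u(u) ‖g‖² dμ)^{1/2}. -/

import Mathlib

open MeasureTheory

theorem stmt4 {Ω : Type*} [MeasurableSpace Ω] (μ : Measure Ω)
    {E : Type*} [NormedAddCommGroup E] [InnerProductSpace ℝ E] [MeasurableSpace E]
    (κx : Ω → ℝ) (hκxm : Measurable κx) (hκx_nonneg : ∀ x, 0 ≤ κx x)
    (κu : ℝ → ℝ) (Cu' : ℝ) (hLip : ∀ s t : ℝ, |κu s - κu t| ≤ Cu' * |s - t|)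
    (κlow : ℝ) (hκlow : 0 < κlow) (hκu_lb : ∀ s : ℝ, κlow ≤ κu s)
    (g : Ω → E) (hgm : Measurable g)
    (C₀ : ℝ) (hC₀ : 0 ≤ C₀) (hgb : ∀ᵐ x ∂μ, Real.sqrt (κx x) * ‖g x‖ ≤ C₀)
    (u v : Ω → ℝ) (hum : Measurable u) (hvm : Measurable v)
    (huv : Integrable (fun x => (u x - v x) ^ 2) μ)
    (hI1 : Integrable (fun x => κx x * κu (u x) * ‖g x‖ ^ 2) μ)
    (hI2 : Integrable (fun x => κx x * (κu (u x) - κu (v x)) * ‖g x‖ ^ 2) μ) :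
    |∫ x, κx x * (κu (u x) - κu (v x)) * ‖g x‖ ^ 2 ∂μ| ≤
      (Cu' * C₀ / Real.sqrt κlow) * Real.sqrt (∫ x, (u x - v x) ^ 2 ∂μ) *
        Real.sqrt (∫ x, κx x * κu (u x) * ‖g x‖ ^ 2 ∂μ) := by
  have hCu' : 0 ≤ Cu' := by
    have := hLip 1 0
    simp at this
    exact le_trans (abs_nonneg _) this
  -- f and h
  set f : Ω → ℝ := fun x => |u x - v x| with hf_def
  set h : Ω → ℝ := fun x => Real.sqrt (κx x * κu (u x) * ‖g x‖ ^ 2) with hh_def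
  have hκuc : Continuous κu := by
    have : LipschitzWith (Real.toNNReal Cu') κu := by
      refine LipschitzWith.of_dist_le_mul fun s t => ?_
      rw [Real.dist_eq, Real.dist_eq, Real.coe_toNNReal _ hCu']
      exact hLip s t
    exact this.continuous
  have hfm : Measurable f := (hum.sub hvm).abs
  have hhm : AEStronglyMeasurable h μ :=
    Real.continuous_sqrt.comp_aestronglyMeasurable hI1.1
  have hI1nn : ∀ x, 0 ≤ κx x * κu (u x) * ‖g x‖ ^ 2 := fun x =>
    mul_nonneg (mul_nonneg (hκx_nonneg x) (le_trans hκlow.le (hκu_lb _))) (sq_nonneg _)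
  have hhsq : ∀ x, h x ^ 2 = κx x * κu (u x) * ‖g x‖ ^ 2 := fun x =>
    Real.sq_sqrt (hI1nn x)
  have hfsq : ∀ x, f x ^ 2 = (u x - v x) ^ 2 := fun x => sq_abs _
  -- Memℒp
  have hfL2 : MemLp f 2 μ := by
    rw [memLp_two_iff_integrable_sq hfm.aestronglyMeasurable]
    exact huv.congr (Filter.Eventually.of_forall fun x => (hfsq x).symm)
  have hhL2 : MemLp h 2 μ := by
    rw [memLp_two_iff_integrable_sq hhm]
    exact hI1.congr (Filter.Eventually.of_forall fun x => (hhsq x).symm)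
  -- integrability of f * h
  have hfh_int : Integrable (fun x => f x * h x) μ := by
    refine Integrable.mono' ((huv.add hI1).div_const 2) (hfm.aestronglyMeasurable.mul hhm) ?_
    refine Filter.Eventually.of_forall fun x => ?_
    simp only [Pi.add_apply]
    rw [Real.norm_eq_abs, abs_mul, abs_of_nonneg (abs_nonneg _),
      abs_of_nonneg (Real.sqrt_nonneg _)]
    have := two_mul_le_add_sq (f x) (h x)
    rw [hfsq x, hhsq x] at this
    simp only [hf_def, hh_def] at this ⊢
    linarith
  -- pointwise bound
  have hpt : ∀ᵐ x ∂μ, |κx x * (κu (u x) - κu (v x)) * ‖g x‖ ^ 2| ≤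
      (Cu' * C₀ / Real.sqrt κlow) * (f x * h x) := by
    filter_upwards [hgb] with x hx
    have hκnn := hκx_nonneg x
    have hsl : 0 < Real.sqrt κlow := Real.sqrt_pos.mpr hκlow
    -- √κx ‖g‖ ≤ h / √κlow
    have h1 : Real.sqrt (κx x) * ‖g x‖ ≤ h x / Real.sqrt κlow := by
      rw [le_div_iff₀ hsl]
      have : Real.sqrt (κx x) * ‖g x‖ * Real.sqrt κlow =
          Real.sqrt (κx x * κlow * ‖g x‖ ^ 2) := by
        rw [Real.sqrt_mul (mul_nonneg hκnn hκlow.le), Real.sqrt_mul hκnn,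
          Real.sqrt_sq (norm_nonneg _)]
        ring
      rw [this]
      exact Real.sqrt_le_sqrt (by nlinarith [hκu_lb (u x), mul_nonneg hκnn (sq_nonneg ‖g x‖)])
    have h2 : κx x * ‖g x‖ ^ 2 = (Real.sqrt (κx x) * ‖g x‖) ^ 2 := by
      rw [mul_pow, Real.sq_sqrt hκnn]
    have hsnn : 0 ≤ Real.sqrt (κx x) * ‖g x‖ :=
      mul_nonneg (Real.sqrt_nonneg _) (norm_nonneg _)
    calc |κx x * (κu (u x) - κu (v x)) * ‖g x‖ ^ 2|
        = |κu (u x) - κu (v x)| * (κx x * ‖g x‖ ^ 2) := by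
          rw [abs_mul, abs_mul, abs_of_nonneg hκnn, abs_of_nonneg (sq_nonneg ‖g x‖)]; ring
      _ ≤ (Cu' * f x) * (C₀ * (h x / Real.sqrt κlow)) := by
          refine mul_le_mul (hLip _ _) ?_ (by positivity) (by positivity)
          rw [h2, sq]
          exact mul_le_mul hx h1 hsnn (le_trans hsnn hx)
      _ = (Cu' * C₀ / Real.sqrt κlow) * (f x * h x) := by ring
  -- |∫| ≤ ∫ | | ≤ c ∫ f h
  have step1 : |∫ x, κx x * (κu (u x) - κu (v x)) * ‖g x‖ ^ 2 ∂μ| ≤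
      (Cu' * C₀ / Real.sqrt κlow) * ∫ x, f x * h x ∂μ := by
    calc |∫ x, κx x * (κu (u x) - κu (v x)) * ‖g x‖ ^ 2 ∂μ|
        ≤ ∫ x, |κx x * (κu (u x) - κu (v x)) * ‖g x‖ ^ 2| ∂μ := by
          simpa only [Real.norm_eq_abs] using
            norm_integral_le_integral_norm (fun x => κx x * (κu (u x) - κu (v x)) * ‖g x‖ ^ 2) (μ := μ)
      _ ≤ ∫ x, (Cu' * C₀ / Real.sqrt κlow) * (f x * h x) ∂μ :=
          integral_mono_ae hI2.abs (hfh_int.const_mul _) hpt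
      _ = (Cu' * C₀ / Real.sqrt κlow) * ∫ x, f x * h x ∂μ := integral_const_mul _ _
  -- Cauchy-Schwarz
  have cs : ∫ x, f x * h x ∂μ ≤
      Real.sqrt (∫ x, (u x - v x) ^ 2 ∂μ) * Real.sqrt (∫ x, κx x * κu (u x) * ‖g x‖ ^ 2 ∂μ) := by
    have hpq : Real.HolderConjugate 2 2 := Real.HolderConjugate.two_two
    have := integral_mul_le_Lp_mul_Lq_of_nonneg hpq
      (Filter.Eventually.of_forall fun x => abs_nonneg (u x - v x))
      (Filter.Eventually.of_forall fun x => Real.sqrt_nonneg _)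
      (by simpa using hfL2) (by simpa using hhL2)
    calc ∫ x, f x * h x ∂μ
        ≤ (∫ x, f x ^ (2:ℝ) ∂μ) ^ (1/(2:ℝ)) * (∫ x, h x ^ (2:ℝ) ∂μ) ^ (1/(2:ℝ)) := this
      _ = _ := by
          rw [← Real.sqrt_eq_rpow, ← Real.sqrt_eq_rpow]
          congr 2 <;> refine integral_congr_ae (Filter.Eventually.of_forall fun x => ?_)
          · simpa [Real.rpow_two] using hfsq x
          · simpa [Real.rpow_two] using hhsq x
  calc |∫ x, κx x * (κu (u x) - κu (v x)) * ‖g x‖ ^ 2 ∂μ|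
      ≤ (Cu' * C₀ / Real.sqrt κlow) * ∫ x, f x * h x ∂μ := step1
    _ ≤ (Cu' * C₀ / Real.sqrt κlow) *
        (Real.sqrt (∫ x, (u x - v x) ^ 2 ∂μ) * Real.sqrt (∫ x, κx x * κu (u x) * ‖g x‖ ^ 2 ∂μ)) :=
        mul_le_mul_of_nonneg_left cs (by positivity)
    _ = _ := by ring
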